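/- arXiv:1407.4913 — 2 statements merged into one kernel-verified Lean document; each statement's English description precedes it below -/
import Mathlib

section
/- Let ψ be a branching mechanism of Lévy–Khintchine form with ψ(1) > 0, and let ψ̃ be the continuous function on [0,∞) with ψ̃(0) = α and ψ̃(λ) = ψ(λ)/λ for λ > 0. Then δ_{ψ̃} = δ_{ψ′} = δ − 1, γ_{ψ̃} = γ_{ψ′} = γ − 1, and η_{ψ̃} = η_{ψ′} = η − 1. -/
open MeasureTheory Filter Set

noncomputable section

/-- The branching mechanism `ψ(λ) = αλ + βλ² + ∫_{(0,∞)} (e^{−λr} − 1 + λr) π(dr)`. -/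
def psiFun (α β : ℝ) (π : Measure ℝ) : ℝ → ℝ := fun l =>
  α * l + β * l ^ 2 + ∫ r, (Real.exp (-(l * r)) - 1 + l * r) ∂π

/-- `ψ′(λ) = α + 2βλ + ∫_{(0,∞)} r(1 − e^{−λr}) π(dr)`. -/
def psiDeriv (α β : ℝ) (π : Measure ℝ) : ℝ → ℝ := fun l =>
  α + 2 * β * l + ∫ r, r * (1 - Real.exp (-(l * r))) ∂π

/-- `(α, β, π)` is the datum of a (sub)critical branching mechanism of
Lévy–Khintchine form: `α, β ≥ 0`, `π` is a Borel measure carried by `(0,∞)`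
with `∫ min(r, r²) π(dr) < ∞`. -/
structure IsBranchingMechanism (α β : ℝ) (π : Measure ℝ) : Prop where
  alpha_nonneg : 0 ≤ α
  beta_nonneg : 0 ≤ β
  carried_on_pos : π (Set.Iic 0) = 0
  integ_min : Integrable (fun r => min r (r ^ 2)) π

/-- The lower index `γ_f = sup {c ≥ 0 : f(λ)λ^{−c} → ∞}` (with `sup ∅ = 0`). -/
def lowerIndex (f : ℝ → ℝ) : ℝ :=
  sSup {c : ℝ | 0 ≤ c ∧ Tendsto (fun l : ℝ => f l * l ^ (-c)) atTop atTop}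

/-- The upper index `η_f = inf {c ≥ 0 : f(λ)λ^{−c} → 0}`. -/
def upperIndex (f : ℝ → ℝ) : ℝ :=
  sInf {c : ℝ | 0 ≤ c ∧ Tendsto (fun l : ℝ => f l * l ^ (-c)) atTop (nhds 0)}

/-- `δ_f = sup {c ≥ 0 : ∃ C > 0, ∀ 1 ≤ μ ≤ λ, C f(μ)μ^{−c} ≤ f(λ)λ^{−c}}`. -/
def deltaIndex (f : ℝ → ℝ) : ℝ :=
  sSup {c : ℝ | 0 ≤ c ∧ ∃ C : ℝ, 0 < C ∧
    ∀ μ l : ℝ, 1 ≤ μ → μ ≤ l → C * (f μ * μ ^ (-c)) ≤ f l * l ^ (-c)}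

/-! ### Auxiliary scalar inequalities -/

lemma aux_g_nonneg (x : ℝ) : 0 ≤ Real.exp (-x) - 1 + x := by
  nlinarith [Real.add_one_le_exp (-x)]

lemma aux_g_le_self {x : ℝ} (hx : 0 ≤ x) : Real.exp (-x) - 1 + x ≤ x := by
  nlinarith [Real.exp_le_one_iff.mpr (neg_nonpos.mpr hx)]

lemma aux_g_le_sq {x : ℝ} (hx : 0 ≤ x) : Real.exp (-x) - 1 + x ≤ x ^ 2 := by
  have h1 := Real.add_one_le_exp x
  have h2 : Real.exp (-x) * Real.exp x = 1 := by rw [← Real.exp_add]; simp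
  nlinarith [Real.exp_pos x, Real.exp_pos (-x)]

lemma aux_g_le_lin {x : ℝ} (hx : 0 ≤ x) :
    Real.exp (-x) - 1 + x ≤ x * (1 - Real.exp (-x)) := by
  have h1 := Real.add_one_le_exp x
  have h2 : Real.exp (-x) * Real.exp x = 1 := by rw [← Real.exp_add]; simp
  nlinarith [Real.exp_pos x, Real.exp_pos (-x)]

lemma aux_one_sub_exp_nonneg {x : ℝ} (hx : 0 ≤ x) : 0 ≤ 1 - Real.exp (-x) := by
  nlinarith [Real.exp_le_one_iff.mpr (neg_nonpos.mpr hx)]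

lemma aux_one_sub_exp_le {x : ℝ} : 1 - Real.exp (-x) ≤ x := by
  nlinarith [Real.add_one_le_exp (-x)]

lemma aux_lin_le_two_g {x : ℝ} (hx : 0 ≤ x) :
    x * (1 - Real.exp (-x)) ≤ 2 * (Real.exp (-x) - 1 + x) := by
  set f : ℝ → ℝ := fun y => 2 * (Real.exp (-y) - 1 + y) - y * (1 - Real.exp (-y)) with hf
  have hder : ∀ y : ℝ, HasDerivAt f (1 - Real.exp (-y) - y * Real.exp (-y)) y := by
    intro y
    have he : HasDerivAt (fun y : ℝ => Real.exp (-y)) (-Real.exp (-y)) y := by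
      simpa [Function.comp_def] using (Real.hasDerivAt_exp (-y)).comp y ((hasDerivAt_id y).neg)
    have h1 : HasDerivAt (fun y : ℝ => 2 * (Real.exp (-y) - 1 + y))
        (2 * (-Real.exp (-y) + 1)) y :=
      (((he.sub_const 1).add (hasDerivAt_id y)).const_mul 2)
    have h2 : HasDerivAt (fun y : ℝ => y * (1 - Real.exp (-y)))
        (1 * (1 - Real.exp (-y)) + y * Real.exp (-y)) y := by
      exact ((hasDerivAt_id y).mul ((hasDerivAt_const y 1).sub he)).congr_deriv (by simp)
    have := h1.sub h2
    exact this.congr_deriv (by ring)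
  have hmono : MonotoneOn f (Set.Ici (0:ℝ)) := by
    apply monotoneOn_of_deriv_nonneg (convex_Ici 0)
    · exact Continuous.continuousOn (by fun_prop)
    · intro y hy
      exact (hder y).differentiableAt.differentiableWithinAt
    · intro y hy
      rw [(hder y).deriv]
      have hy0 : 0 ≤ y := le_of_lt (by simpa using hy)
      have h1 := Real.add_one_le_exp y
      have h2 : Real.exp (-y) * Real.exp y = 1 := by rw [← Real.exp_add]; simp
      nlinarith [Real.exp_pos y, Real.exp_pos (-y)]
  have h0 : f 0 ≤ f x := hmono (by simp) (by simpa using hx) hx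
  simp only [hf] at h0
  norm_num at h0
  linarith

lemma aux_slope_weak {a b : ℝ} (ha : 0 ≤ a) (hab : a ≤ b) :
    b * (Real.exp (-a) - 1 + a) ≤ 2 * (a * (Real.exp (-b) - 1 + b)) := by
  have hb : 0 ≤ b := ha.trans hab
  have h1 : Real.exp (-a) - 1 + a ≤ a * (1 - Real.exp (-a)) := aux_g_le_lin ha
  have h2 : 1 - Real.exp (-a) ≤ 1 - Real.exp (-b) := by
    have := Real.exp_le_exp.mpr (neg_le_neg hab); linarith
  have h3 : b * (1 - Real.exp (-b)) ≤ 2 * (Real.exp (-b) - 1 + b) := aux_lin_le_two_g hb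
  have h4 : 0 ≤ 1 - Real.exp (-a) := aux_one_sub_exp_nonneg ha
  calc b * (Real.exp (-a) - 1 + a) ≤ b * (a * (1 - Real.exp (-a))) := by
        apply mul_le_mul_of_nonneg_left h1 hb
    _ ≤ a * (b * (1 - Real.exp (-b))) := by
        nlinarith [mul_nonneg (mul_nonneg ha hb) h4, mul_nonneg ha hb]
    _ ≤ 2 * (a * (Real.exp (-b) - 1 + b)) := by nlinarith

/-! ### Integrability and basic properties of `psiFun`, `psiDeriv` -/

lemma aux_ae_pos {α β : ℝ} {π : Measure ℝ} (h : IsBranchingMechanism α β π) :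
    ∀ᵐ r ∂π, 0 < r := by
  have hs : {r : ℝ | ¬ 0 < r} = Set.Iic 0 := by ext r; simp
  rw [MeasureTheory.ae_iff, hs]
  exact h.carried_on_pos

lemma aux_integrable_g {α β : ℝ} {π : Measure ℝ} (h : IsBranchingMechanism α β π)
    {l : ℝ} (hl : 0 ≤ l) :
    Integrable (fun r => Real.exp (-(l * r)) - 1 + l * r) π := by
  apply Integrable.mono' (h.integ_min.const_mul (l + l ^ 2))
  · apply Continuous.aestronglyMeasurable; fun_prop
  · filter_upwards [aux_ae_pos h] with r hr
    have hlr : 0 ≤ l * r := mul_nonneg hl hr.le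
    rw [Real.norm_eq_abs, abs_of_nonneg (aux_g_nonneg _)]
    rcases le_or_gt r 1 with hr1 | hr1
    · have hmin : min r (r ^ 2) = r ^ 2 := min_eq_right (by nlinarith)
      have := aux_g_le_sq hlr
      rw [hmin]; nlinarith
    · have hmin : min r (r ^ 2) = r := min_eq_left (by nlinarith)
      have := aux_g_le_self hlr
      rw [hmin]; nlinarith

lemma aux_integrable_d {α β : ℝ} {π : Measure ℝ} (h : IsBranchingMechanism α β π)
    {l : ℝ} (hl : 0 ≤ l) :
    Integrable (fun r => r * (1 - Real.exp (-(l * r)))) π := by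
  apply Integrable.mono' (h.integ_min.const_mul (1 + l))
  · apply Continuous.aestronglyMeasurable; fun_prop
  · filter_upwards [aux_ae_pos h] with r hr
    have hlr : 0 ≤ l * r := mul_nonneg hl hr.le
    rw [Real.norm_eq_abs, abs_of_nonneg (mul_nonneg hr.le (aux_one_sub_exp_nonneg hlr))]
    have hle : 1 - Real.exp (-(l * r)) ≤ l * r := aux_one_sub_exp_le
    have hle1 : 1 - Real.exp (-(l * r)) ≤ 1 := by
      nlinarith [Real.exp_pos (-(l * r))]
    rcases le_or_gt r 1 with hr1 | hr1
    · have hmin : min r (r ^ 2) = r ^ 2 := min_eq_right (by nlinarith)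
      rw [hmin]; nlinarith
    · have hmin : min r (r ^ 2) = r := min_eq_left (by nlinarith)
      rw [hmin]; nlinarith

lemma aux_psi_nonneg {α β : ℝ} {π : Measure ℝ} (h : IsBranchingMechanism α β π)
    {l : ℝ} (hl : 0 ≤ l) : 0 ≤ psiFun α β π l := by
  have hi : 0 ≤ ∫ r, (Real.exp (-(l * r)) - 1 + l * r) ∂π :=
    integral_nonneg fun r => aux_g_nonneg _
  have := h.alpha_nonneg; have := h.beta_nonneg
  unfold psiFun; positivity

lemma aux_psi_le_mul {α β : ℝ} {π : Measure ℝ} (h : IsBranchingMechanism α β π)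
    {l : ℝ} (hl : 0 ≤ l) : psiFun α β π l ≤ l * psiDeriv α β π l := by
  have hint : (∫ r, (Real.exp (-(l * r)) - 1 + l * r) ∂π)
      ≤ ∫ r, l * (r * (1 - Real.exp (-(l * r)))) ∂π := by
    apply integral_mono_ae (aux_integrable_g h hl) ((aux_integrable_d h hl).const_mul l)
    filter_upwards [aux_ae_pos h] with r hr
    have hlr : 0 ≤ l * r := mul_nonneg hl hr.le
    have := aux_g_le_lin hlr
    calc Real.exp (-(l * r)) - 1 + l * r ≤ (l * r) * (1 - Real.exp (-(l * r))) := this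
      _ = l * (r * (1 - Real.exp (-(l * r)))) := by ring
  rw [MeasureTheory.integral_const_mul] at hint
  have hb : 0 ≤ β * l ^ 2 := mul_nonneg h.beta_nonneg (by positivity)
  unfold psiFun psiDeriv
  nlinarith [hb]

lemma aux_mul_le_two_psi {α β : ℝ} {π : Measure ℝ} (h : IsBranchingMechanism α β π)
    {l : ℝ} (hl : 0 ≤ l) : l * psiDeriv α β π l ≤ 2 * psiFun α β π l := by
  have hint : (∫ r, l * (r * (1 - Real.exp (-(l * r)))) ∂π)
      ≤ ∫ r, 2 * (Real.exp (-(l * r)) - 1 + l * r) ∂π := by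
    apply integral_mono_ae ((aux_integrable_d h hl).const_mul l)
      ((aux_integrable_g h hl).const_mul 2)
    filter_upwards [aux_ae_pos h] with r hr
    have hlr : 0 ≤ l * r := mul_nonneg hl hr.le
    have := aux_lin_le_two_g hlr
    calc l * (r * (1 - Real.exp (-(l * r)))) = (l * r) * (1 - Real.exp (-(l * r))) := by ring
      _ ≤ 2 * (Real.exp (-(l * r)) - 1 + l * r) := this
  rw [MeasureTheory.integral_const_mul, MeasureTheory.integral_const_mul] at hint
  have ha : 0 ≤ α * l := mul_nonneg h.alpha_nonneg hl
  unfold psiFun psiDeriv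
  nlinarith

lemma aux_psi_slope {α β : ℝ} {π : Measure ℝ} (h : IsBranchingMechanism α β π)
    {μ l : ℝ} (hμ : 0 < μ) (hμl : μ ≤ l) :
    l * psiFun α β π μ ≤ 2 * (μ * psiFun α β π l) := by
  have hl : 0 < l := hμ.trans_le hμl
  have hint : (∫ r, l * (Real.exp (-(μ * r)) - 1 + μ * r) ∂π)
      ≤ ∫ r, 2 * μ * (Real.exp (-(l * r)) - 1 + l * r) ∂π := by
    apply integral_mono_ae ((aux_integrable_g h hμ.le).const_mul l)
      ((aux_integrable_g h hl.le).const_mul (2 * μ))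
    filter_upwards [aux_ae_pos h] with r hr
    have h1 : (l * r) * (Real.exp (-(μ * r)) - 1 + μ * r)
        ≤ 2 * ((μ * r) * (Real.exp (-(l * r)) - 1 + l * r)) := by
      have := aux_slope_weak (mul_nonneg hμ.le hr.le)
        (mul_le_mul_of_nonneg_right hμl hr.le)
      linarith
    have hg := aux_g_nonneg (μ * r)
    nlinarith [hr]
  rw [MeasureTheory.integral_const_mul, MeasureTheory.integral_const_mul] at hint
  have ha := h.alpha_nonneg; have hb := h.beta_nonneg
  unfold psiFun
  set I1 := ∫ r, Real.exp (-(μ * r)) - 1 + μ * r ∂π with hI1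
  set I2 := ∫ r, Real.exp (-(l * r)) - 1 + l * r ∂π with hI2
  have hbb : β * μ ^ 2 * l ≤ β * l ^ 2 * μ := by
    nlinarith [mul_nonneg hb (mul_nonneg (mul_nonneg hμ.le hl.le) (sub_nonneg.mpr hμl))]
  have haa : 0 ≤ α * μ * l := mul_nonneg (mul_nonneg ha hμ.le) hl.le
  have hbl : 0 ≤ β * l ^ 2 * μ := mul_nonneg (mul_nonneg hb (sq_nonneg l)) hμ.le
  nlinarith [hint, hbb, haa, hbl]

lemma aux_psi_upper {α β : ℝ} {π : Measure ℝ} (h : IsBranchingMechanism α β π)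
    {l : ℝ} (hl : 1 ≤ l) :
    psiFun α β π l ≤ (α + β + 2 * ∫ r, min r (r ^ 2) ∂π) * l ^ 2 := by
  have hl0 : (0:ℝ) ≤ l := by linarith
  have hint : (∫ r, (Real.exp (-(l * r)) - 1 + l * r) ∂π)
      ≤ ∫ r, 2 * l ^ 2 * min r (r ^ 2) ∂π := by
    apply integral_mono_ae (aux_integrable_g h hl0) (h.integ_min.const_mul _)
    filter_upwards [aux_ae_pos h] with r hr
    have hlr : 0 ≤ l * r := mul_nonneg hl0 hr.le
    rcases le_or_gt r 1 with hr1 | hr1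
    · have hmin : min r (r ^ 2) = r ^ 2 := min_eq_right (by nlinarith)
      have := aux_g_le_sq hlr
      rw [hmin]; nlinarith
    · have hmin : min r (r ^ 2) = r := min_eq_left (by nlinarith)
      have := aux_g_le_self hlr
      rw [hmin]; nlinarith
  rw [MeasureTheory.integral_const_mul] at hint
  have ha := h.alpha_nonneg; have hb := h.beta_nonneg
  unfold psiFun
  set I := ∫ r, Real.exp (-(l * r)) - 1 + l * r ∂π with hI
  set M := ∫ r, min r (r ^ 2) ∂π with hM
  nlinarith [hint, mul_nonneg ha (by nlinarith : (0:ℝ) ≤ l ^ 2 - l)]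

/-! ### Generic sSup/sInf shift lemmas -/

lemma aux_sSup_shift (S : Set ℝ) (hB : BddAbove S) (hsub : Set.Ico (0:ℝ) 1 ⊆ S)
    (hS0 : S ⊆ Set.Ici 0) :
    sSup {c : ℝ | 0 ≤ c ∧ (c + 1) ∈ S} = sSup S - 1 := by
  set T : Set ℝ := {c : ℝ | 0 ≤ c ∧ (c + 1) ∈ S} with hT
  obtain ⟨M, hM⟩ := hB
  have hTB : BddAbove T := ⟨M - 1, fun c hc => by have := hM hc.2; linarith⟩
  have hSne : S.Nonempty := ⟨0, hsub ⟨le_refl 0, zero_lt_one⟩⟩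
  by_cases hTne : T.Nonempty
  · apply le_antisymm
    · apply csSup_le hTne
      intro c hc
      have := le_csSup ⟨M, hM⟩ hc.2
      linarith
    · rw [sub_le_iff_le_add]
      apply csSup_le hSne
      intro x hx
      rcases le_or_gt 1 x with hx1 | hx1
      · have hxT : x - 1 ∈ T := ⟨by linarith, by simpa using hx⟩
        have := le_csSup hTB hxT
        linarith
      · obtain ⟨c₀, hc₀⟩ := hTne
        have := le_csSup hTB hc₀
        have : (0:ℝ) ≤ sSup T := le_trans hc₀.1 this
        linarith
  · have hTempty : T = ∅ := Set.not_nonempty_iff_eq_empty.mp hTne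
    have hSsub : S ⊆ Set.Ico 0 1 := by
      intro x hx
      refine ⟨hS0 hx, ?_⟩
      by_contra hx1
      push_neg at hx1
      exact hTne ⟨x - 1, by constructor <;> [linarith; simpa using hx]⟩
    have hSeq : S = Set.Ico (0:ℝ) 1 := le_antisymm hSsub hsub
    rw [hTempty, hSeq, Real.sSup_empty, csSup_Ico zero_lt_one]
    norm_num

lemma aux_sInf_shift (S : Set ℝ) (hne : S.Nonempty) (h1 : S ⊆ Set.Ici 1) :
    sInf {c : ℝ | 0 ≤ c ∧ (c + 1) ∈ S} = sInf S - 1 := by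
  set T : Set ℝ := {c : ℝ | 0 ≤ c ∧ (c + 1) ∈ S} with hT
  have hSB : BddBelow S := ⟨1, fun x hx => h1 hx⟩
  have hTB : BddBelow T := ⟨0, fun c hc => hc.1⟩
  obtain ⟨x, hx⟩ := hne
  have hx1 : 1 ≤ x := h1 hx
  have hTne : T.Nonempty := ⟨x - 1, by constructor <;> [linarith; simpa using hx]⟩
  apply le_antisymm
  · have hle : ∀ y ∈ S, sInf T + 1 ≤ y := by
      intro y hy
      have hy1 : 1 ≤ y := h1 hy
      have : sInf T ≤ y - 1 := csInf_le hTB ⟨by linarith, by simpa using hy⟩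
      linarith
    have := le_csInf ⟨x, hx⟩ hle
    linarith
  · apply le_csInf hTne
    intro c hc
    have := csInf_le hSB hc.2
    linarith

/-! ### Index-level lemmas -/

section Indices

variable {ψ t g : ℝ → ℝ} {p K : ℝ}

lemma aux_rpow_split {l : ℝ} (hl : 0 < l) (c : ℝ) : l ^ (1 - c) = l * l ^ (-c) := by
  rw [show (1 - c) = 1 + (-c) by ring, Real.rpow_add hl, Real.rpow_one]

lemma aux_rpow_split2 {l : ℝ} (hl : 0 < l) (c : ℝ) : l ^ (2 - c) = l ^ 2 * l ^ (-c) := by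
  rw [show (2 - c) = 2 + (-c) by ring, Real.rpow_add hl, Real.rpow_two,
    ← Real.rpow_natCast l 2]

variable (hp : 0 < p) (hlow : ∀ l : ℝ, 1 ≤ l → p * l ≤ 2 * ψ l)
  (hK : 0 < K) (hup : ∀ l : ℝ, 1 ≤ l → ψ l ≤ K * l ^ 2)
  (hnn : ∀ l : ℝ, 1 ≤ l → 0 ≤ ψ l)
  (hslope : ∀ μ l : ℝ, 1 ≤ μ → μ ≤ l → l * ψ μ ≤ 2 * (μ * ψ l))

include hlow in
lemma aux_F_lower {c l : ℝ} (hl : 1 ≤ l) : p / 2 * l ^ (1 - c) ≤ ψ l * l ^ (-c) := by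
  have hl0 : (0:ℝ) < l := lt_of_lt_of_le one_pos hl
  have h1 : p / 2 * l ≤ ψ l := by have := hlow l hl; linarith
  have h2 : 0 ≤ l ^ (-c) := Real.rpow_nonneg hl0.le _
  calc p / 2 * l ^ (1 - c) = (p / 2 * l) * l ^ (-c) := by rw [aux_rpow_split hl0]; ring
    _ ≤ ψ l * l ^ (-c) := mul_le_mul_of_nonneg_right h1 h2

include hup in
lemma aux_F_upper {c l : ℝ} (hl : 1 ≤ l) : ψ l * l ^ (-c) ≤ K * l ^ (2 - c) := by
  have hl0 : (0:ℝ) < l := lt_of_lt_of_le one_pos hl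
  have h2 : 0 ≤ l ^ (-c) := Real.rpow_nonneg hl0.le _
  calc ψ l * l ^ (-c) ≤ (K * l ^ 2) * l ^ (-c) :=
      mul_le_mul_of_nonneg_right (hup l hl) h2
    _ = K * l ^ (2 - c) := by rw [aux_rpow_split2 hl0]; ring

include hup hnn in
lemma aux_F_tendsto_zero {c : ℝ} (hc : 2 < c) :
    Tendsto (fun l : ℝ => ψ l * l ^ (-c)) atTop (nhds 0) := by
  apply squeeze_zero' (g := fun l : ℝ => K * l ^ (2 - c))
  · filter_upwards [eventually_ge_atTop (1:ℝ)] with l hl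
    exact mul_nonneg (hnn l hl) (Real.rpow_nonneg (by linarith) _)
  · filter_upwards [eventually_ge_atTop (1:ℝ)] with l hl
    exact aux_F_upper hup hl
  · have h1 : Tendsto (fun l : ℝ => l ^ (-(c - 2))) atTop (nhds 0) :=
      tendsto_rpow_neg_atTop (by linarith)
    have h2 := h1.const_mul K
    simpa [mul_zero] using h2.congr (fun l => by norm_num)

include hp hlow in
lemma aux_F_tendsto_atTop {c : ℝ} (hc : c < 1) :
    Tendsto (fun l : ℝ => ψ l * l ^ (-c)) atTop atTop := by
  refine tendsto_atTop_mono' atTop ?_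
    ((tendsto_rpow_atTop (by linarith : (0:ℝ) < 1 - c)).const_mul_atTop
      (by positivity : (0:ℝ) < p / 2))
  filter_upwards [eventually_ge_atTop (1:ℝ)] with l hl
  exact aux_F_lower hlow hl

include hp hlow in
lemma aux_F_not_zero {c : ℝ} (hc : c ≤ 1) :
    ¬ Tendsto (fun l : ℝ => ψ l * l ^ (-c)) atTop (nhds 0) := by
  intro ht
  have hev : ∀ᶠ l : ℝ in atTop, p / 2 ≤ ψ l * l ^ (-c) := by
    filter_upwards [eventually_ge_atTop (1:ℝ)] with l hl
    have h1 : (1:ℝ) ≤ l ^ (1 - c) := Real.one_le_rpow hl (by linarith)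
    have := aux_F_lower hlow (c := c) hl
    nlinarith
  have hlt : ∀ᶠ l : ℝ in atTop, ψ l * l ^ (-c) < p / 2 :=
    ht.eventually (gt_mem_nhds (by positivity))
  obtain ⟨l, h1, h2⟩ := (hev.and hlt).exists
  linarith

include hp hlow in
lemma aux_SA_sub : Set.Ico (0:ℝ) 1 ⊆
    {c : ℝ | 0 ≤ c ∧ Tendsto (fun l : ℝ => ψ l * l ^ (-c)) atTop atTop} :=
  fun c hc => ⟨hc.1, aux_F_tendsto_atTop hp hlow hc.2⟩

include hK hup hnn in
lemma aux_SA_bdd : {c : ℝ | 0 ≤ c ∧ Tendsto (fun l : ℝ => ψ l * l ^ (-c)) atTop atTop}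
    ⊆ Set.Iic 2 := by
  intro c hc
  rw [Set.mem_Iic]
  by_contra hc2
  push_neg at hc2
  exact not_tendsto_atTop_of_tendsto_nhds (aux_F_tendsto_zero hup hnn hc2) hc.2

include hK hup hnn in
lemma aux_SZ_mem : (3:ℝ) ∈
    {c : ℝ | 0 ≤ c ∧ Tendsto (fun l : ℝ => ψ l * l ^ (-c)) atTop (nhds 0)} :=
  ⟨by norm_num, aux_F_tendsto_zero hup hnn (by norm_num)⟩

include hp hlow in
lemma aux_SZ_sub : {c : ℝ | 0 ≤ c ∧ Tendsto (fun l : ℝ => ψ l * l ^ (-c)) atTop (nhds 0)}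
    ⊆ Set.Ici 1 := by
  intro c hc
  rw [Set.mem_Ici]
  by_contra hc1
  push_neg at hc1
  exact aux_F_not_zero hp hlow (le_of_lt hc1) hc.2

include hp hnn hslope in
lemma aux_SD_sub : Set.Ico (0:ℝ) 1 ⊆
    {c : ℝ | 0 ≤ c ∧ ∃ C : ℝ, 0 < C ∧
      ∀ μ l : ℝ, 1 ≤ μ → μ ≤ l → C * (ψ μ * μ ^ (-c)) ≤ ψ l * l ^ (-c)} := by
  rintro c ⟨hc0, hc1⟩
  refine ⟨hc0, 1/2, by norm_num, ?_⟩
  intro μ l hμ hμl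
  have hμ0 : (0:ℝ) < μ := lt_of_lt_of_le one_pos hμ
  have hl0 : (0:ℝ) < l := lt_of_lt_of_le hμ0 hμl
  have hl1 : (1:ℝ) ≤ l := hμ.trans hμl
  have h1 : ψ μ / μ ≤ 2 * ψ l / l := by
    rw [div_le_div_iff₀ hμ0 hl0]
    have := hslope μ l hμ hμl
    nlinarith
  have h2 : μ ^ (1 - c) ≤ l ^ (1 - c) := Real.rpow_le_rpow hμ0.le hμl (by linarith)
  have h3 : 0 ≤ μ ^ (1 - c) := Real.rpow_nonneg hμ0.le _
  have h4 : 0 ≤ 2 * ψ l / l := by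
    have := hnn l hl1; positivity
  have key : ψ μ / μ * μ ^ (1 - c) ≤ (2 * ψ l / l) * l ^ (1 - c) :=
    mul_le_mul h1 h2 h3 h4
  rw [aux_rpow_split hμ0, aux_rpow_split hl0] at key
  have e1 : ψ μ / μ * (μ * μ ^ (-c)) = ψ μ * μ ^ (-c) := by
    field_simp
  have e2 : (2 * ψ l / l) * (l * l ^ (-c)) = 2 * (ψ l * l ^ (-c)) := by
    field_simp
  rw [e1, e2] at key
  linarith

include hp hlow hK hup in
lemma aux_SD_bdd : {c : ℝ | 0 ≤ c ∧ ∃ C : ℝ, 0 < C ∧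
      ∀ μ l : ℝ, 1 ≤ μ → μ ≤ l → C * (ψ μ * μ ^ (-c)) ≤ ψ l * l ^ (-c)}
    ⊆ Set.Iic 2 := by
  rintro c ⟨hc0, C, hC, hCle⟩
  rw [Set.mem_Iic]
  by_contra hc2
  push_neg at hc2
  have hψ1 : 0 < ψ 1 := by have := hlow 1 le_rfl; linarith
  have hbase : ∀ l : ℝ, 1 ≤ l → C * ψ 1 ≤ K * l ^ (2 - c) := by
    intro l hl
    have h1 := hCle 1 l le_rfl hl
    rw [Real.one_rpow] at h1
    have h2 := aux_F_upper hup (c := c) hl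
    simp only [mul_one] at h1
    linarith
  have htend : Tendsto (fun l : ℝ => K * l ^ (2 - c)) atTop (nhds 0) := by
    have h1 : Tendsto (fun l : ℝ => l ^ (-(c - 2))) atTop (nhds 0) :=
      tendsto_rpow_neg_atTop (by linarith)
    have h2 := h1.const_mul K
    simpa [mul_zero] using h2.congr (fun l => by norm_num)
  have hlt := htend.eventually (gt_mem_nhds (show (0:ℝ) < C * ψ 1 by positivity))
  obtain ⟨l, hl1, hl2⟩ := ((eventually_ge_atTop (1:ℝ)).and hlt).exists
  exact absurd (hbase l hl1) (not_le.mpr hl2)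

/-! ### Shifted-set identifications -/

variable (heq : ∀ c : ℝ, ∀ l : ℝ, 1 ≤ l → t l * l ^ (-c) = ψ l * l ^ (-(c+1)))

include heq in
lemma aux_setA_shift :
    {c : ℝ | 0 ≤ c ∧ Tendsto (fun l : ℝ => t l * l ^ (-c)) atTop atTop}
    = {c : ℝ | 0 ≤ c ∧ (c+1) ∈ {c : ℝ | 0 ≤ c ∧
        Tendsto (fun l : ℝ => ψ l * l ^ (-c)) atTop atTop}} := by
  ext c
  simp only [Set.mem_setOf_eq]
  have hev : (fun l : ℝ => t l * l ^ (-c)) =ᶠ[atTop] fun l => ψ l * l ^ (-(c+1)) := by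
    filter_upwards [eventually_ge_atTop (1:ℝ)] with l hl using heq c l hl
  constructor
  · rintro ⟨hc, ht⟩
    exact ⟨hc, by linarith, (tendsto_congr' hev).mp ht⟩
  · rintro ⟨hc, -, ht⟩
    exact ⟨hc, (tendsto_congr' hev).mpr ht⟩

include heq in
lemma aux_setZ_shift :
    {c : ℝ | 0 ≤ c ∧ Tendsto (fun l : ℝ => t l * l ^ (-c)) atTop (nhds 0)}
    = {c : ℝ | 0 ≤ c ∧ (c+1) ∈ {c : ℝ | 0 ≤ c ∧
        Tendsto (fun l : ℝ => ψ l * l ^ (-c)) atTop (nhds 0)}} := by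
  ext c
  simp only [Set.mem_setOf_eq]
  have hev : (fun l : ℝ => t l * l ^ (-c)) =ᶠ[atTop] fun l => ψ l * l ^ (-(c+1)) := by
    filter_upwards [eventually_ge_atTop (1:ℝ)] with l hl using heq c l hl
  constructor
  · rintro ⟨hc, ht⟩
    exact ⟨hc, by linarith, (tendsto_congr' hev).mp ht⟩
  · rintro ⟨hc, -, ht⟩
    exact ⟨hc, (tendsto_congr' hev).mpr ht⟩

include heq in
lemma aux_setD_shift :
    {c : ℝ | 0 ≤ c ∧ ∃ C : ℝ, 0 < C ∧
      ∀ μ l : ℝ, 1 ≤ μ → μ ≤ l → C * (t μ * μ ^ (-c)) ≤ t l * l ^ (-c)}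
    = {c : ℝ | 0 ≤ c ∧ (c+1) ∈ {c : ℝ | 0 ≤ c ∧ ∃ C : ℝ, 0 < C ∧
      ∀ μ l : ℝ, 1 ≤ μ → μ ≤ l → C * (ψ μ * μ ^ (-c)) ≤ ψ l * l ^ (-c)}} := by
  ext c
  simp only [Set.mem_setOf_eq]
  constructor
  · rintro ⟨hc, C, hC, hCle⟩
    refine ⟨hc, by linarith, C, hC, ?_⟩
    intro μ l hμ hμl
    rw [← heq c μ hμ, ← heq c l (hμ.trans hμl)]
    exact hCle μ l hμ hμl
  · rintro ⟨hc, -, C, hC, hCle⟩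
    refine ⟨hc, C, hC, ?_⟩
    intro μ l hμ hμl
    rw [heq c μ hμ, heq c l (hμ.trans hμl)]
    exact hCle μ l hμ hμl

variable (hsand : ∀ c : ℝ, ∀ l : ℝ, 1 ≤ l →
    ψ l * l ^ (-(c+1)) ≤ g l * l ^ (-c) ∧ g l * l ^ (-c) ≤ 2 * (ψ l * l ^ (-(c+1))))

include hsand in
lemma aux_setA_sand :
    {c : ℝ | 0 ≤ c ∧ Tendsto (fun l : ℝ => g l * l ^ (-c)) atTop atTop}
    = {c : ℝ | 0 ≤ c ∧ (c+1) ∈ {c : ℝ | 0 ≤ c ∧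
        Tendsto (fun l : ℝ => ψ l * l ^ (-c)) atTop atTop}} := by
  ext c
  simp only [Set.mem_setOf_eq]
  constructor
  · rintro ⟨hc, ht⟩
    refine ⟨hc, by linarith, ?_⟩
    refine tendsto_atTop_mono' atTop ?_ (ht.const_mul_atTop (by norm_num : (0:ℝ) < 1/2))
    filter_upwards [eventually_ge_atTop (1:ℝ)] with l hl
    have := (hsand c l hl).2
    linarith
  · rintro ⟨hc, -, ht⟩
    refine ⟨hc, ?_⟩
    refine tendsto_atTop_mono' atTop ?_ ht
    filter_upwards [eventually_ge_atTop (1:ℝ)] with l hl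
    exact (hsand c l hl).1

include hsand hnn in
lemma aux_setZ_sand :
    {c : ℝ | 0 ≤ c ∧ Tendsto (fun l : ℝ => g l * l ^ (-c)) atTop (nhds 0)}
    = {c : ℝ | 0 ≤ c ∧ (c+1) ∈ {c : ℝ | 0 ≤ c ∧
        Tendsto (fun l : ℝ => ψ l * l ^ (-c)) atTop (nhds 0)}} := by
  have hψnn : ∀ c : ℝ, ∀ᶠ l : ℝ in atTop, 0 ≤ ψ l * l ^ (-(c+1)) := by
    intro c
    filter_upwards [eventually_ge_atTop (1:ℝ)] with l hl
    exact mul_nonneg (hnn l hl) (Real.rpow_nonneg (by linarith) _)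
  ext c
  simp only [Set.mem_setOf_eq]
  constructor
  · rintro ⟨hc, ht⟩
    refine ⟨hc, by linarith, ?_⟩
    apply squeeze_zero' (hψnn c) _ ht
    filter_upwards [eventually_ge_atTop (1:ℝ)] with l hl
    exact (hsand c l hl).1
  · rintro ⟨hc, -, ht⟩
    refine ⟨hc, ?_⟩
    apply squeeze_zero' (g := fun l : ℝ => 2 * (ψ l * l ^ (-(c+1))))
    · filter_upwards [hψnn c, eventually_ge_atTop (1:ℝ)] with l h0 hl
      exact le_trans h0 (hsand c l hl).1
    · filter_upwards [eventually_ge_atTop (1:ℝ)] with l hl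
      exact (hsand c l hl).2
    · simpa using ht.const_mul 2

include hsand in
lemma aux_setD_sand :
    {c : ℝ | 0 ≤ c ∧ ∃ C : ℝ, 0 < C ∧
      ∀ μ l : ℝ, 1 ≤ μ → μ ≤ l → C * (g μ * μ ^ (-c)) ≤ g l * l ^ (-c)}
    = {c : ℝ | 0 ≤ c ∧ (c+1) ∈ {c : ℝ | 0 ≤ c ∧ ∃ C : ℝ, 0 < C ∧
      ∀ μ l : ℝ, 1 ≤ μ → μ ≤ l → C * (ψ μ * μ ^ (-c)) ≤ ψ l * l ^ (-c)}} := by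
  ext c
  simp only [Set.mem_setOf_eq]
  constructor
  · rintro ⟨hc, C, hC, hCle⟩
    refine ⟨hc, by linarith, C/2, by positivity, ?_⟩
    intro μ l hμ hμl
    have h1 := (hsand c μ hμ).1
    have h2 := (hsand c l (hμ.trans hμl)).2
    have h3 := hCle μ l hμ hμl
    nlinarith
  · rintro ⟨hc, -, C, hC, hCle⟩
    refine ⟨hc, C/2, by positivity, ?_⟩
    intro μ l hμ hμl
    have h1 := (hsand c μ hμ).2
    have h2 := (hsand c l (hμ.trans hμl)).1
    have h3 := hCle μ l hμ hμl
    nlinarith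

end Indices

/-- with ψ̃ the continuous function on [0,∞) such that ψ̃(0) = α
and ψ̃(λ) = ψ(λ)/λ for λ > 0, one has δ_{ψ̃} = δ_{ψ′} = δ − 1,
γ_{ψ̃} = γ_{ψ′} = γ − 1 and η_{ψ̃} = η_{ψ′} = η − 1. -/
theorem statement4 (α β : ℝ) (π : Measure ℝ) (h : IsBranchingMechanism α β π)
    (hpos : 0 < psiFun α β π 1)
    (ψtilde : ℝ → ℝ) (hψtilde0 : ψtilde 0 = α)
    (hψtilde : ∀ l : ℝ, 0 < l → ψtilde l = psiFun α β π l / l) :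
    deltaIndex ψtilde = deltaIndex (psiFun α β π) - 1 ∧
    deltaIndex (psiDeriv α β π) = deltaIndex (psiFun α β π) - 1 ∧
    lowerIndex ψtilde = lowerIndex (psiFun α β π) - 1 ∧
    lowerIndex (psiDeriv α β π) = lowerIndex (psiFun α β π) - 1 ∧
    upperIndex ψtilde = upperIndex (psiFun α β π) - 1 ∧
    upperIndex (psiDeriv α β π) = upperIndex (psiFun α β π) - 1 := by
  set ψ : ℝ → ℝ := psiFun α β π with hψdef
  set ψ' : ℝ → ℝ := psiDeriv α β π with hψ'def
  -- basic quantitative facts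
  have hp : 0 < ψ 1 := hpos
  have hlow : ∀ l : ℝ, 1 ≤ l → ψ 1 * l ≤ 2 * ψ l := by
    intro l hl
    have := aux_psi_slope h one_pos hl
    simpa [mul_comm] using this
  set K : ℝ := α + β + 2 * ∫ r, min r (r ^ 2) ∂π with hKdef
  have hup : ∀ l : ℝ, 1 ≤ l → ψ l ≤ K * l ^ 2 := fun l hl => aux_psi_upper h hl
  have hK : 0 < K := by
    have := hup 1 le_rfl
    simp only [one_pow, mul_one] at this
    linarith
  have hnn : ∀ l : ℝ, 1 ≤ l → 0 ≤ ψ l := fun l hl => aux_psi_nonneg h (by linarith)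
  have hslope : ∀ μ l : ℝ, 1 ≤ μ → μ ≤ l → l * ψ μ ≤ 2 * (μ * ψ l) :=
    fun μ l hμ hμl => aux_psi_slope h (by linarith) hμl
  -- the ψtilde translation
  have heq : ∀ c : ℝ, ∀ l : ℝ, 1 ≤ l → ψtilde l * l ^ (-c) = ψ l * l ^ (-(c+1)) := by
    intro c l hl
    have hl0 : (0:ℝ) < l := lt_of_lt_of_le one_pos hl
    rw [hψtilde l hl0]
    rw [show -(c+1) = -c + -1 by ring, Real.rpow_add hl0, Real.rpow_neg_one]
    field_simp
  -- the ψ' sandwich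
  have hsand : ∀ c : ℝ, ∀ l : ℝ, 1 ≤ l →
      ψ l * l ^ (-(c+1)) ≤ ψ' l * l ^ (-c) ∧
      ψ' l * l ^ (-c) ≤ 2 * (ψ l * l ^ (-(c+1))) := by
    intro c l hl
    have hl0 : (0:ℝ) < l := lt_of_lt_of_le one_pos hl
    have hsplit : l * l ^ (-(c+1)) = l ^ (-c) := by
      rw [show -c = 1 - (c+1) by ring, aux_rpow_split hl0]
    have hr : 0 ≤ l ^ (-(c+1)) := Real.rpow_nonneg hl0.le _
    have h1 : ψ l ≤ l * ψ' l := aux_psi_le_mul h hl0.le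
    have h2 : l * ψ' l ≤ 2 * ψ l := aux_mul_le_two_psi h hl0.le
    constructor
    · calc ψ l * l ^ (-(c+1)) ≤ (l * ψ' l) * l ^ (-(c+1)) :=
          mul_le_mul_of_nonneg_right h1 hr
        _ = ψ' l * (l * l ^ (-(c+1))) := by ring
        _ = ψ' l * l ^ (-c) := by rw [hsplit]
    · calc ψ' l * l ^ (-c) = ψ' l * (l * l ^ (-(c+1))) := by rw [hsplit]
        _ = (l * ψ' l) * l ^ (-(c+1)) := by ring
        _ ≤ (2 * ψ l) * l ^ (-(c+1)) := mul_le_mul_of_nonneg_right h2 hr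
        _ = 2 * (ψ l * l ^ (-(c+1))) := by ring
  -- hypotheses for the generic shift lemmas
  have hSA_bdd : BddAbove {c : ℝ | 0 ≤ c ∧
      Tendsto (fun l : ℝ => ψ l * l ^ (-c)) atTop atTop} :=
    ⟨2, fun c hc => aux_SA_bdd hK hup hnn hc⟩
  have hSA_sub := aux_SA_sub hp hlow
  have hSA_0 : {c : ℝ | 0 ≤ c ∧ Tendsto (fun l : ℝ => ψ l * l ^ (-c)) atTop atTop}
      ⊆ Set.Ici 0 := fun c hc => hc.1
  have hSD_bdd : BddAbove {c : ℝ | 0 ≤ c ∧ ∃ C : ℝ, 0 < C ∧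
      ∀ μ l : ℝ, 1 ≤ μ → μ ≤ l → C * (ψ μ * μ ^ (-c)) ≤ ψ l * l ^ (-c)} :=
    ⟨2, fun c hc => aux_SD_bdd hp hlow hK hup hc⟩
  have hSD_sub := aux_SD_sub hp hnn hslope
  have hSD_0 : {c : ℝ | 0 ≤ c ∧ ∃ C : ℝ, 0 < C ∧
      ∀ μ l : ℝ, 1 ≤ μ → μ ≤ l → C * (ψ μ * μ ^ (-c)) ≤ ψ l * l ^ (-c)}
      ⊆ Set.Ici 0 := fun c hc => hc.1
  have hSZ_ne : {c : ℝ | 0 ≤ c ∧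
      Tendsto (fun l : ℝ => ψ l * l ^ (-c)) atTop (nhds 0)}.Nonempty :=
    ⟨3, aux_SZ_mem hK hup hnn⟩
  have hSZ_sub := aux_SZ_sub hp hlow
  refine ⟨?_, ?_, ?_, ?_, ?_, ?_⟩
  · show deltaIndex ψtilde = deltaIndex ψ - 1
    unfold deltaIndex
    rw [aux_setD_shift heq]
    exact aux_sSup_shift _ hSD_bdd hSD_sub hSD_0
  · show deltaIndex ψ' = deltaIndex ψ - 1
    unfold deltaIndex
    rw [aux_setD_sand hsand]
    exact aux_sSup_shift _ hSD_bdd hSD_sub hSD_0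
  · show lowerIndex ψtilde = lowerIndex ψ - 1
    unfold lowerIndex
    rw [aux_setA_shift heq]
    exact aux_sSup_shift _ hSA_bdd hSA_sub hSA_0
  · show lowerIndex ψ' = lowerIndex ψ - 1
    unfold lowerIndex
    rw [aux_setA_sand hsand]
    exact aux_sSup_shift _ hSA_bdd hSA_sub hSA_0
  · show upperIndex ψtilde = upperIndex ψ - 1
    unfold upperIndex
    rw [aux_setZ_shift heq]
    exact aux_sInf_shift _ hSZ_ne hSZ_sub
  · show upperIndex ψ' = upperIndex ψ - 1
    unfold upperIndex
    rw [aux_setZ_sand hnn hsand]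
    exact aux_sInf_shift _ hSZ_ne hSZ_sub
end
end

section
/- Let ψ be a branching mechanism of Lévy–Khintchine form with δ > 1. Then the integral I(v) = ∫_v^∞ (∫_v^b ψ(a) da)^{−1/2} db is finite for every v > 0, and there exists a constant C₁ ∈ (0,∞), depending only on ψ, such that: (a) I(v) ≤ (C₁·v/ψ(v))^{1/2} for every v ≥ 1; and (b) for every v ∈ (1,∞) and every r ∈ (0,∞) with r ≤ I(v), one has ψ′(v) ≤ 4C₁·r^{−2} (equivalently, v ≤ ψ′^{−1}(4C₁·r^{−2})). -/
open MeasureTheory Filter Set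

noncomputable section

lemma nonneg_on_Ici {g g' : ℝ → ℝ} (hg : ∀ x, HasDerivAt g (g' x) x)
    (h' : ∀ x, 0 ≤ x → 0 ≤ g' x) (h0 : g 0 = 0) : ∀ x, 0 ≤ x → 0 ≤ g x := by
  intro x hx
  have hm : MonotoneOn g (Ici 0) := by
    apply monotoneOn_of_deriv_nonneg (convex_Ici 0)
    · exact fun y _ => (hg y).continuousAt.continuousWithinAt
    · exact fun y _ => (hg y).differentiableAt.differentiableWithinAt
    · intro y hy
      rw [interior_Ici] at hy
      rw [(hg y).deriv]
      exact h' y (le_of_lt hy)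
  have := hm (self_mem_Ici) (show x ∈ Ici 0 from hx) hx
  linarith [h0 ▸ this]

lemma hasDerivAt_expneg (x : ℝ) : HasDerivAt (fun y : ℝ => Real.exp (-y)) (-Real.exp (-x)) x := by
  simpa using (hasDerivAt_neg x).exp

lemma exp_aux2 : ∀ x : ℝ, 0 ≤ x → Real.exp (-x) - 1 + x ≤ x ^ 2 := by
  have key := nonneg_on_Ici (g := fun x => x ^ 2 - (Real.exp (-x) - 1 + x))
    (g' := fun x => 2 * x - (-Real.exp (-x) + 1)) (fun x => by
      have h1 := hasDerivAt_expneg x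
      have h2 : HasDerivAt (fun y : ℝ => y ^ 2) (2 * x) x := by
        simpa using (hasDerivAt_pow 2 x)
      have := h2.sub ((h1.sub_const 1).add (hasDerivAt_id x))
      exact this)
    (fun x hx => by
      nlinarith [Real.add_one_le_exp (-x)]) (by simp)
  intro x hx; have := key x hx; linarith

lemma exp_aux4 : ∀ x : ℝ, 0 ≤ x → x * (1 - Real.exp (-x)) ≤ 2 * (Real.exp (-x) - 1 + x) := by
  have key := nonneg_on_Ici
    (g := fun x => 2 * (Real.exp (-x) - 1 + x) - x * (1 - Real.exp (-x)))
    (g' := fun x => 2 * (-Real.exp (-x) + 1) - ((1 - Real.exp (-x)) + x * Real.exp (-x)))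
    (fun x => by
      have h1 := hasDerivAt_expneg x
      have h2 : HasDerivAt (fun y : ℝ => 2 * (Real.exp (-y) - 1 + y))
          (2 * (-Real.exp (-x) + 1)) x := (((h1.sub_const 1).add (hasDerivAt_id x)).const_mul 2)
      have h3 : HasDerivAt (fun y : ℝ => y * (1 - Real.exp (-y)))
          ((1 - Real.exp (-x)) + x * Real.exp (-x)) x := by
        have := (hasDerivAt_id x).mul ((hasDerivAt_const x (1:ℝ)).sub h1)
        exact this.congr_deriv (by simp only [Pi.sub_apply, id, one_mul]; ring)
      exact h2.sub h3)
    (fun x hx => by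
      have hkey : (1 + x) * Real.exp (-x) ≤ 1 := by
        rw [Real.exp_neg, ← div_eq_mul_inv, div_le_one (Real.exp_pos x)]
        linarith [Real.add_one_le_exp x]
      nlinarith) (by simp)
  intro x hx; have := key x hx; linarith

lemma exp_aux3 : ∀ x y : ℝ, 0 ≤ x → x ≤ y → Real.exp (-x) + x ≤ Real.exp (-y) + y := by
  intro x y hx hxy
  have key := nonneg_on_Ici
    (g := fun t => (Real.exp (-(x + t)) + (x + t)) - (Real.exp (-x) + x))
    (g' := fun t => -Real.exp (-(x + t)) + 1)
    (fun t => by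
      have h1 : HasDerivAt (fun s : ℝ => x + s) 1 t := by
        simpa using (hasDerivAt_id t).const_add x
      have h2 := (hasDerivAt_expneg (x + t)).comp t h1
      have := (h2.add h1).sub_const (Real.exp (-x) + x)
      exact this.congr_deriv (by ring))
    (fun t ht => by
      nlinarith [Real.exp_le_one_iff.2 (show -(x + t) ≤ 0 by linarith)]) (by simp)
  have := key (y - x) (by linarith)
  have hxy' : x + (y - x) = y := by ring
  rw [hxy'] at this; linarith

section Psi

variable {α β : ℝ} {π : Measure ℝ}

lemma exp_aux1 : ∀ x : ℝ, 0 ≤ x → 0 ≤ Real.exp (-x) - 1 + x := by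
  intro x hx; linarith [Real.add_one_le_exp (-x)]

lemma exp_aux1' : ∀ x : ℝ, 0 < x → 0 < Real.exp (-x) - 1 + x := by
  intro x hx; have := Real.add_one_lt_exp (show -x ≠ 0 by linarith); linarith

lemma exp_aux5 : ∀ x : ℝ, 0 ≤ x → 1 - Real.exp (-x) ≤ x := by
  intro x hx; linarith [Real.add_one_le_exp (-x)]

lemma exp_aux6 : ∀ x : ℝ, 0 ≤ x → 0 ≤ 1 - Real.exp (-x) := by
  intro x hx; have : Real.exp (-x) ≤ 1 := Real.exp_le_one_iff.2 (by linarith); linarith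

lemma ae_pos (h : IsBranchingMechanism α β π) : ∀ᵐ r ∂π, 0 < r := by
  have hs : {r : ℝ | ¬ 0 < r} = Iic 0 := by ext r; simp
  rw [ae_iff, hs]; exact h.carried_on_pos

lemma integrable_psi_integrand (h : IsBranchingMechanism α β π) {l : ℝ} (hl : 0 ≤ l) :
    Integrable (fun r => Real.exp (-(l * r)) - 1 + l * r) π := by
  apply Integrable.mono' (h.integ_min.const_mul (max l (l ^ 2)))
  · exact (Continuous.aestronglyMeasurable (by continuity))
  · filter_upwards [ae_pos h] with r hr
    have hx : 0 ≤ l * r := mul_nonneg hl hr.le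
    rw [Real.norm_eq_abs, abs_of_nonneg (exp_aux1 _ hx)]
    rcases le_total r 1 with h1 | h1
    · have hmin : min r (r ^ 2) = r ^ 2 := min_eq_right (by nlinarith)
      have := exp_aux2 (l * r) hx
      rw [hmin]
      calc Real.exp (-(l * r)) - 1 + l * r ≤ (l * r) ^ 2 := this
        _ ≤ max l (l ^ 2) * r ^ 2 := by
            have : l ^ 2 ≤ max l (l ^ 2) := le_max_right _ _
            nlinarith [sq_nonneg r]
    · have hmin : min r (r ^ 2) = r := min_eq_left (by nlinarith)
      rw [hmin]
      have h2 : Real.exp (-(l * r)) ≤ 1 := Real.exp_le_one_iff.2 (by linarith)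
      have : l ≤ max l (l ^ 2) := le_max_left _ _
      nlinarith

lemma integrable_psiDeriv_integrand (h : IsBranchingMechanism α β π) {l : ℝ} (hl : 0 ≤ l) :
    Integrable (fun r => r * (1 - Real.exp (-(l * r)))) π := by
  apply Integrable.mono' (h.integ_min.const_mul (max 1 l))
  · exact (Continuous.aestronglyMeasurable (by continuity))
  · filter_upwards [ae_pos h] with r hr
    have hx : 0 ≤ l * r := mul_nonneg hl hr.le
    have h0 : 0 ≤ 1 - Real.exp (-(l * r)) := exp_aux6 _ hx
    rw [Real.norm_eq_abs, abs_of_nonneg (mul_nonneg hr.le h0)]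
    rcases le_total r 1 with h1 | h1
    · have hmin : min r (r ^ 2) = r ^ 2 := min_eq_right (by nlinarith)
      rw [hmin]
      have := exp_aux5 (l * r) hx
      have hll : l ≤ max 1 l := le_max_right _ _
      nlinarith [sq_nonneg r]
    · have hmin : min r (r ^ 2) = r := min_eq_left (by nlinarith)
      rw [hmin]
      have h2 : Real.exp (-(l * r)) ≤ 1 := Real.exp_le_one_iff.2 (by linarith)
      have hll : (1:ℝ) ≤ max 1 l := le_max_left _ _
      nlinarith [mul_le_of_le_one_right hr.le (show 1 - Real.exp (-(l * r)) ≤ 1 by linarith [Real.exp_pos (-(l * r))])]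

lemma psi_int_nonneg (h : IsBranchingMechanism α β π) {l : ℝ} (hl : 0 ≤ l) :
    0 ≤ ∫ r, (Real.exp (-(l * r)) - 1 + l * r) ∂π := by
  apply integral_nonneg_of_ae
  filter_upwards [ae_pos h] with r hr
  exact exp_aux1 _ (mul_nonneg hl hr.le)

lemma psi_nonneg (h : IsBranchingMechanism α β π) {l : ℝ} (hl : 0 ≤ l) :
    0 ≤ psiFun α β π l := by
  have h1 : 0 ≤ α * l := mul_nonneg h.alpha_nonneg hl
  have h2 : 0 ≤ β * l ^ 2 := mul_nonneg h.beta_nonneg (sq_nonneg l)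
  have h3 := psi_int_nonneg h hl
  unfold psiFun; linarith

lemma psi_mono (h : IsBranchingMechanism α β π) :
    ∀ x y : ℝ, 0 ≤ x → x ≤ y → psiFun α β π x ≤ psiFun α β π y := by
  intro x y hx hxy
  have hy : 0 ≤ y := hx.trans hxy
  unfold psiFun
  have hint : (∫ r, (Real.exp (-(x * r)) - 1 + x * r) ∂π)
      ≤ ∫ r, (Real.exp (-(y * r)) - 1 + y * r) ∂π := by
    apply integral_mono_ae (integrable_psi_integrand h hx) (integrable_psi_integrand h hy)
    filter_upwards [ae_pos h] with r hr
    have := exp_aux3 (x * r) (y * r) (mul_nonneg hx hr.le)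
      (by nlinarith)
    linarith
  have h1 : α * x ≤ α * y := by nlinarith [h.alpha_nonneg]
  have h2 : β * x ^ 2 ≤ β * y ^ 2 := by
    nlinarith [mul_nonneg (mul_nonneg h.beta_nonneg (sub_nonneg.2 hxy)) (show (0:ℝ) ≤ x + y by linarith)]
  linarith

lemma psi_deriv_le (h : IsBranchingMechanism α β π) {v : ℝ} (hv : 0 < v) :
    v * psiDeriv α β π v ≤ 2 * psiFun α β π v := by
  unfold psiDeriv psiFun
  have key : v * ∫ r, r * (1 - Real.exp (-(v * r))) ∂π
      ≤ 2 * ∫ r, (Real.exp (-(v * r)) - 1 + v * r) ∂π := by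
    rw [← integral_const_mul, ← integral_const_mul]
    apply integral_mono_ae ((integrable_psiDeriv_integrand h hv.le).const_mul v)
      ((integrable_psi_integrand h hv.le).const_mul 2)
    filter_upwards [ae_pos h] with r hr
    have := exp_aux4 (v * r) (mul_nonneg hv.le hr.le)
    nlinarith
  have h1 : v * α ≤ 2 * (α * v) := by nlinarith [h.alpha_nonneg]
  have h2 : v * (2 * β * v) ≤ 2 * (β * v ^ 2) := by nlinarith
  nlinarith


lemma psi_pos (h : IsBranchingMechanism α β π) (hδ : 1 < deltaIndex (psiFun α β π)) :
    ∀ l : ℝ, 0 < l → 0 < psiFun α β π l := by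
  by_cases hcase : 0 < α ∨ 0 < β ∨ 0 < π (Set.Ioi 0)
  · intro l hl
    have h3 := psi_int_nonneg h hl.le
    have h1 : 0 ≤ α * l := mul_nonneg h.alpha_nonneg hl.le
    have h2 : 0 ≤ β * l ^ 2 := mul_nonneg h.beta_nonneg (sq_nonneg l)
    unfold psiFun
    rcases hcase with hA | hB | hP
    · have : 0 < α * l := mul_pos hA hl; linarith
    · have : 0 < β * l ^ 2 := mul_pos hB (by positivity); linarith
    · have hpos : 0 < ∫ r, (Real.exp (-(l * r)) - 1 + l * r) ∂π := by
        rw [integral_pos_iff_support_of_nonneg_ae ?_ (integrable_psi_integrand h hl.le)]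
        · refine lt_of_lt_of_le hP (measure_mono ?_)
          intro r hr
          have : 0 < Real.exp (-(l * r)) - 1 + l * r := exp_aux1' _ (mul_pos hl hr)
          simp only [Function.support, Set.mem_setOf_eq]
          exact ne_of_gt this
        · filter_upwards [ae_pos h] with r hr
          exact exp_aux1 _ (mul_nonneg hl.le hr.le)
      linarith
  · exfalso
    push_neg at hcase
    obtain ⟨hA, hB, hP⟩ := hcase
    have hA0 : α = 0 := le_antisymm hA h.alpha_nonneg
    have hB0 : β = 0 := le_antisymm hB h.beta_nonneg
    have hP0 : π (Set.Ioi 0) = 0 := le_antisymm hP zero_le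
    have hπ0 : π = 0 := by
      have : π Set.univ = 0 := by
        have : Set.univ = Set.Iic (0:ℝ) ∪ Set.Ioi 0 := by
          ext x; simp [le_or_gt]
        rw [this]
        exact le_antisymm ((measure_union_le _ _).trans
          (by rw [h.carried_on_pos, hP0]; simp)) zero_le
      exact Measure.measure_univ_eq_zero.1 this
    have hzero : ∀ l : ℝ, psiFun α β π l = 0 := by
      intro l; simp [psiFun, hA0, hB0, hπ0]
    have hset : Set.Ici (0:ℝ) ⊆ {c : ℝ | 0 ≤ c ∧ ∃ C : ℝ, 0 < C ∧
        ∀ μ l : ℝ, 1 ≤ μ → μ ≤ l → C * (psiFun α β π μ * μ ^ (-c)) ≤ psiFun α β π l * l ^ (-c)} := by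
      intro c hc
      exact ⟨hc, 1, one_pos, fun μ l _ _ => by simp [hzero]⟩
    have hnb : ¬ BddAbove {c : ℝ | 0 ≤ c ∧ ∃ C : ℝ, 0 < C ∧
        ∀ μ l : ℝ, 1 ≤ μ → μ ≤ l → C * (psiFun α β π μ * μ ^ (-c)) ≤ psiFun α β π l * l ^ (-c)} :=
      fun hb => not_bddAbove_Ici (0:ℝ) (hb.mono hset)
    have : deltaIndex (psiFun α β π) = 0 := by
      unfold deltaIndex
      exact Real.sSup_of_not_bddAbove hnb
    rw [this] at hδ; linarith

lemma delta_extract {f : ℝ → ℝ} (hδ : 1 < deltaIndex f) :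
    ∃ c : ℝ, 1 < c ∧ ∃ C : ℝ, 0 < C ∧
      ∀ μ l : ℝ, 1 ≤ μ → μ ≤ l → C * (f μ * μ ^ (-c)) ≤ f l * l ^ (-c) := by
  by_contra hno
  push_neg at hno
  have : deltaIndex f ≤ 1 := by
    apply Real.sSup_le _ zero_le_one
    rintro c ⟨hc0, C, hC, hineq⟩
    by_contra hc1
    push_neg at hc1
    exact absurd hineq (by simpa using hno c hc1 C hC)
  linarith


lemma psi_monotoneOn (h : IsBranchingMechanism α β π) :
    MonotoneOn (psiFun α β π) (Set.Ici 0) :=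
  fun x hx _ _ hxy => psi_mono h x _ hx hxy

lemma psi_intInt (h : IsBranchingMechanism α β π) {v b : ℝ} (hv : 0 ≤ v) (hvb : v ≤ b) :
    IntervalIntegrable (psiFun α β π) volume v b := by
  apply MonotoneOn.intervalIntegrable
  apply (psi_monotoneOn h).mono
  rw [Set.uIcc_of_le hvb]
  exact fun x hx => hv.trans hx.1

lemma F_lower (h : IsBranchingMechanism α β π) {v b : ℝ} (hv : 0 ≤ v) (hvb : v ≤ b) :
    psiFun α β π v * (b - v) ≤ ∫ a in v..b, psiFun α β π a := by
  have := intervalIntegral.integral_mono_on (f := fun _ => psiFun α β π v)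
    (g := psiFun α β π) (μ := volume) hvb intervalIntegrable_const (psi_intInt h hv hvb)
    (fun a ha => psi_mono h v a hv ha.1)
  simpa [intervalIntegral.integral_const, mul_comm] using this

lemma F_nonneg (h : IsBranchingMechanism α β π) {v b : ℝ} (hv : 0 ≤ v) (hvb : v ≤ b) :
    0 ≤ ∫ a in v..b, psiFun α β π a := by
  have := F_lower h hv hvb
  nlinarith [psi_nonneg h hv]

lemma F_split (h : IsBranchingMechanism α β π) {v w b : ℝ} (hv : 0 ≤ v) (hvw : v ≤ w)
    (hwb : w ≤ b) :
    (∫ a in w..b, psiFun α β π a) ≤ ∫ a in v..b, psiFun α β π a := by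
  rw [← intervalIntegral.integral_add_adjacent_intervals (psi_intInt h hv hvw)
    (psi_intInt h (hv.trans hvw) hwb)]
  linarith [F_nonneg h hv hvw]


lemma scale_lower {c C : ℝ} (hC : 0 < C)
    (hs : ∀ μ l : ℝ, 1 ≤ μ → μ ≤ l → C * (psiFun α β π μ * μ ^ (-c)) ≤ psiFun α β π l * l ^ (-c))
    {m l : ℝ} (hm : 1 ≤ m) (hml : m ≤ l) :
    C * psiFun α β π m * m ^ (-c) * l ^ c ≤ psiFun α β π l := by
  have hl : (0:ℝ) < l := lt_of_lt_of_le one_pos (hm.trans hml)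
  have h1 := hs m l hm hml
  have h2 : (0:ℝ) < l ^ c := Real.rpow_pos_of_pos hl c
  have h3 := mul_le_mul_of_nonneg_right h1 h2.le
  have h4 : psiFun α β π l * l ^ (-c) * l ^ c = psiFun α β π l := by
    rw [mul_assoc, ← Real.rpow_add hl]
    simp
  rw [h4] at h3
  calc C * psiFun α β π m * m ^ (-c) * l ^ c
      = C * (psiFun α β π m * m ^ (-c)) * l ^ c := by ring
    _ ≤ psiFun α β π l := h3

lemma F_tail (h : IsBranchingMechanism α β π) {c C : ℝ} (hC : 0 < C)
    (hs : ∀ μ l : ℝ, 1 ≤ μ → μ ≤ l → C * (psiFun α β π μ * μ ^ (-c)) ≤ psiFun α β π l * l ^ (-c))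
    {v b : ℝ} (hv : 0 < v) (hb : 2 * max v 1 ≤ b) :
    C * psiFun α β π (max v 1) * (max v 1) ^ (-c) * (2:ℝ) ^ (-(c+1)) * b ^ (c+1)
      ≤ ∫ a in v..b, psiFun α β π a := by
  have hm1 : (1:ℝ) ≤ max v 1 := le_max_right v 1
  have hvm : v ≤ max v 1 := le_max_left v 1
  have hmpos : (0:ℝ) < max v 1 := lt_of_lt_of_le one_pos hm1
  have hb2 : max v 1 ≤ b / 2 := by linarith
  have hb2pos : 0 < b / 2 := lt_of_lt_of_le hmpos hb2
  have hbpos : 0 < b := by linarith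
  have hvb2 : v ≤ b / 2 := hvm.trans hb2
  have hb2b : b / 2 ≤ b := by linarith
  have t1 := F_split h hv.le hvb2 hb2b
  have t2 := F_lower h hb2pos.le hb2b
  have t3 := scale_lower (π := π) hC hs hm1 hb2
  have e1 : (b/2) ^ (c+1) = b ^ (c+1) * (2:ℝ) ^ (-(c+1)) := by
    rw [Real.rpow_neg (by norm_num : (0:ℝ) ≤ 2), Real.div_rpow hbpos.le (by norm_num : (0:ℝ) ≤ 2),
      div_eq_mul_inv]
  have e2 : (b/2) ^ c * (b/2) = (b/2) ^ (c+1) := (Real.rpow_add_one (ne_of_gt hb2pos) c).symm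
  calc C * psiFun α β π (max v 1) * (max v 1) ^ (-c) * (2:ℝ) ^ (-(c+1)) * b ^ (c+1)
      = (C * psiFun α β π (max v 1) * (max v 1) ^ (-c)) * ((b/2) ^ c * (b/2)) := by
        rw [e2, e1]; ring
    _ ≤ psiFun α β π (b/2) * (b/2) := by
        have := mul_le_mul_of_nonneg_right t3 hb2pos.le
        calc (C * psiFun α β π (max v 1) * (max v 1) ^ (-c)) * ((b/2) ^ c * (b/2))
            = (C * psiFun α β π (max v 1) * (max v 1) ^ (-c) * (b/2) ^ c) * (b/2) := by ring
          _ ≤ psiFun α β π (b/2) * (b/2) := this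
    _ = psiFun α β π (b/2) * (b - b/2) := by ring_nf
    _ ≤ ∫ a in (b/2)..b, psiFun α β π a := t2
    _ ≤ ∫ a in v..b, psiFun α β π a := t1

lemma F_measurable (h : IsBranchingMechanism α β π) {v : ℝ} (hv : 0 < v) :
    Measurable (fun b => ∫ a in v..(max b v), psiFun α β π a) := by
  apply Monotone.measurable
  intro b1 b2 hb
  have h1 : v ≤ max b1 v := le_max_right _ _
  have h2 : max b1 v ≤ max b2 v := max_le_max hb le_rfl
  simp only []
  rw [← intervalIntegral.integral_add_adjacent_intervals (psi_intInt h hv.le h1)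
    (psi_intInt h (hv.le.trans h1) h2)]
  linarith [F_nonneg h (hv.le.trans h1) h2]

lemma g_meas (h : IsBranchingMechanism α β π) {v : ℝ} (hv : 0 < v) {s : Set ℝ}
    (hsm : MeasurableSet s) (hsub : s ⊆ Set.Ioi v) :
    AEStronglyMeasurable (fun b => (∫ a in v..b, psiFun α β π a) ^ (-(1:ℝ)/2))
      (volume.restrict s) := by
  have hm : Measurable (fun b => (∫ a in v..(max b v), psiFun α β π a) ^ (-(1:ℝ)/2)) := by
    have := F_measurable h hv
    measurability
  apply (hm.aestronglyMeasurable.restrict).congr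
  rw [EventuallyEq, ae_restrict_iff' hsm]
  apply ae_of_all
  intro b hb
  have : max b v = b := max_eq_left (le_of_lt (hsub hb))
  rw [this]


lemma g_le_Ioc (h : IsBranchingMechanism α β π)
    (hδ : 1 < deltaIndex (psiFun α β π)) {v b : ℝ} (hv : 0 < v) (hvb : v < b) :
    (∫ a in v..b, psiFun α β π a) ^ (-(1:ℝ)/2)
      ≤ psiFun α β π v ^ (-(1:ℝ)/2) * (b - v) ^ (-(1:ℝ)/2) := by
  have hpos := psi_pos h hδ v hv
  have hF := F_lower h hv.le hvb.le
  have hFpos : 0 < psiFun α β π v * (b - v) := mul_pos hpos (by linarith)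
  calc (∫ a in v..b, psiFun α β π a) ^ (-(1:ℝ)/2)
      ≤ (psiFun α β π v * (b - v)) ^ (-(1:ℝ)/2) :=
        Real.rpow_le_rpow_of_nonpos hFpos hF (by norm_num)
    _ = psiFun α β π v ^ (-(1:ℝ)/2) * (b - v) ^ (-(1:ℝ)/2) :=
        Real.mul_rpow hpos.le (by linarith)

lemma g_le_tail (h : IsBranchingMechanism α β π)
    (hδ : 1 < deltaIndex (psiFun α β π)) {c C : ℝ} (hC : 0 < C)
    (hs : ∀ μ l : ℝ, 1 ≤ μ → μ ≤ l → C * (psiFun α β π μ * μ ^ (-c)) ≤ psiFun α β π l * l ^ (-c))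
    {v b : ℝ} (hv : 0 < v) (hb : 2 * max v 1 < b) :
    (∫ a in v..b, psiFun α β π a) ^ (-(1:ℝ)/2)
      ≤ (C * psiFun α β π (max v 1) * (max v 1) ^ (-c) * (2:ℝ) ^ (-(c+1))) ^ (-(1:ℝ)/2)
        * b ^ ((c+1) * (-(1:ℝ)/2)) := by
  set m := max v 1 with hm
  set K := C * psiFun α β π m * m ^ (-c) * (2:ℝ) ^ (-(c+1)) with hK
  have hm1 : (1:ℝ) ≤ m := le_max_right v 1
  have hmpos : (0:ℝ) < m := lt_of_lt_of_le one_pos hm1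
  have hψm : 0 < psiFun α β π m := psi_pos h hδ m hmpos
  have hKpos : 0 < K :=
    mul_pos (mul_pos (mul_pos hC hψm) (Real.rpow_pos_of_pos hmpos _))
      (Real.rpow_pos_of_pos (by norm_num) _)
  have hvb : v < b := by
    have : v ≤ m := le_max_left v 1
    linarith
  have hbpos : 0 < b := by
    have : (0:ℝ) < m := hmpos
    linarith
  have hF : K * b ^ (c+1) ≤ ∫ a in v..b, psiFun α β π a := by
    have := F_tail h hC hs hv (le_of_lt hb)
    calc K * b ^ (c+1) = C * psiFun α β π m * m ^ (-c) * (2:ℝ) ^ (-(c+1)) * b ^ (c+1) := by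
          rw [hK]
      _ ≤ _ := this
  have hFpos : 0 < K * b ^ (c+1) := mul_pos hKpos (Real.rpow_pos_of_pos hbpos _)
  calc (∫ a in v..b, psiFun α β π a) ^ (-(1:ℝ)/2)
      ≤ (K * b ^ (c+1)) ^ (-(1:ℝ)/2) :=
        Real.rpow_le_rpow_of_nonpos hFpos hF (by norm_num)
    _ = K ^ (-(1:ℝ)/2) * b ^ ((c+1) * (-(1:ℝ)/2)) := by
        rw [Real.mul_rpow hKpos.le (Real.rpow_nonneg hbpos.le _),
          ← Real.rpow_mul hbpos.le]

lemma g_int_Ioc (h : IsBranchingMechanism α β π)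
    (hδ : 1 < deltaIndex (psiFun α β π)) {v M : ℝ} (hv : 0 < v) :
    IntegrableOn (fun b => (∫ a in v..b, psiFun α β π a) ^ (-(1:ℝ)/2))
      (Set.Ioc v M) := by
  rcases le_or_gt M v with hMv | hvM
  · rw [Set.Ioc_eq_empty (by exact fun hlt => absurd (hlt.trans_le hMv) (lt_irrefl v))]
    exact integrableOn_empty
  have hpos := psi_pos h hδ v hv
  apply Integrable.mono'
    (g := fun b => psiFun α β π v ^ (-(1:ℝ)/2) * (b - v) ^ (-(1:ℝ)/2))
  · have base : IntervalIntegrable (fun x : ℝ => x ^ (-(1:ℝ)/2)) volume 0 (M - v) := by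
      apply intervalIntegral.intervalIntegrable_rpow'
      norm_num
    have shifted := base.comp_sub_right v
    simp only [zero_add, sub_add_cancel] at shifted
    have : IntegrableOn (fun b : ℝ => (b - v) ^ (-(1:ℝ)/2)) (Set.Ioc v M) :=
      (intervalIntegrable_iff_integrableOn_Ioc_of_le hvM.le).1 shifted
    exact this.const_mul _
  · exact g_meas h hv measurableSet_Ioc Set.Ioc_subset_Ioi_self
  · rw [ae_restrict_iff' measurableSet_Ioc]
    apply ae_of_all
    intro b hb
    have hvb : v < b := hb.1
    have hF := F_lower h hv.le hvb.le
    have hFpos : 0 < psiFun α β π v * (b - v) := mul_pos hpos (by linarith)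
    rw [Real.norm_eq_abs, abs_of_nonneg (Real.rpow_nonneg (F_nonneg h hv.le hvb.le) _)]
    calc (∫ a in v..b, psiFun α β π a) ^ (-(1:ℝ)/2)
        ≤ (psiFun α β π v * (b - v)) ^ (-(1:ℝ)/2) :=
          Real.rpow_le_rpow_of_nonpos hFpos hF (by norm_num)
      _ = psiFun α β π v ^ (-(1:ℝ)/2) * (b - v) ^ (-(1:ℝ)/2) :=
          Real.mul_rpow hpos.le (by linarith)

lemma g_int_Ioi (h : IsBranchingMechanism α β π)
    (hδ : 1 < deltaIndex (psiFun α β π)) {c C : ℝ} (hc : 1 < c) (hC : 0 < C)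
    (hs : ∀ μ l : ℝ, 1 ≤ μ → μ ≤ l → C * (psiFun α β π μ * μ ^ (-c)) ≤ psiFun α β π l * l ^ (-c))
    {v : ℝ} (hv : 0 < v) :
    IntegrableOn (fun b => (∫ a in v..b, psiFun α β π a) ^ (-(1:ℝ)/2))
      (Set.Ioi (2 * max v 1)) := by
  set m := max v 1 with hm
  set K := C * psiFun α β π m * m ^ (-c) * (2:ℝ) ^ (-(c+1)) with hK
  have hm1 : (1:ℝ) ≤ m := le_max_right v 1
  have hmpos : (0:ℝ) < m := lt_of_lt_of_le one_pos hm1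
  have hψm : 0 < psiFun α β π m := psi_pos h hδ m hmpos
  have hKpos : 0 < K := by
    apply mul_pos (mul_pos (mul_pos hC hψm) (Real.rpow_pos_of_pos hmpos _))
      (Real.rpow_pos_of_pos (by norm_num) _)
  apply Integrable.mono'
    (g := fun b => K ^ (-(1:ℝ)/2) * b ^ ((c+1) * (-(1:ℝ)/2)))
  · apply Integrable.const_mul
    apply integrableOn_Ioi_rpow_of_lt
    · nlinarith
    · positivity
  · exact g_meas h hv measurableSet_Ioi (fun b hb => by
      simp only [Set.mem_Ioi] at hb ⊢
      have : v ≤ m := le_max_left v 1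
      linarith)
  · rw [ae_restrict_iff' measurableSet_Ioi]
    apply ae_of_all
    intro b hb
    simp only [Set.mem_Ioi] at hb
    have hvb : v < b := by
      have : v ≤ m := le_max_left v 1
      linarith
    have hbpos : 0 < b := by linarith
    have hF : K * b ^ (c+1) ≤ ∫ a in v..b, psiFun α β π a := by
      have := F_tail h hC hs hv (le_of_lt hb)
      calc K * b ^ (c+1) = C * psiFun α β π m * m ^ (-c) * (2:ℝ) ^ (-(c+1)) * b ^ (c+1) := by
            rw [hK]
        _ ≤ _ := this
    have hFpos : 0 < K * b ^ (c+1) := mul_pos hKpos (Real.rpow_pos_of_pos hbpos _)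
    rw [Real.norm_eq_abs, abs_of_nonneg (Real.rpow_nonneg (F_nonneg h hv.le hvb.le) _)]
    calc (∫ a in v..b, psiFun α β π a) ^ (-(1:ℝ)/2)
        ≤ (K * b ^ (c+1)) ^ (-(1:ℝ)/2) :=
          Real.rpow_le_rpow_of_nonpos hFpos hF (by norm_num)
      _ = K ^ (-(1:ℝ)/2) * b ^ ((c+1) * (-(1:ℝ)/2)) := by
          rw [Real.mul_rpow hKpos.le (Real.rpow_nonneg hbpos.le _),
            ← Real.rpow_mul hbpos.le]

lemma g_int (h : IsBranchingMechanism α β π)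
    (hδ : 1 < deltaIndex (psiFun α β π)) {c C : ℝ} (hc : 1 < c) (hC : 0 < C)
    (hs : ∀ μ l : ℝ, 1 ≤ μ → μ ≤ l → C * (psiFun α β π μ * μ ^ (-c)) ≤ psiFun α β π l * l ^ (-c))
    {v : ℝ} (hv : 0 < v) :
    IntegrableOn (fun b => (∫ a in v..b, psiFun α β π a) ^ (-(1:ℝ)/2)) (Set.Ioi v) := by
  have hvM : v ≤ 2 * max v 1 := by
    have h1 : v ≤ max v 1 := le_max_left v 1
    have h2 : (0:ℝ) < max v 1 := lt_of_lt_of_le one_pos (le_max_right v 1)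
    linarith
  rw [← Set.Ioc_union_Ioi_eq_Ioi hvM]
  exact (g_int_Ioc h hδ hv).union (g_int_Ioi h hδ hc hC hs hv)


lemma int_Ioc_eval {v : ℝ} (hv : 0 < v) :
    ∫ b in Set.Ioc v (2*v), (b - v) ^ (-(1:ℝ)/2) = 2 * Real.sqrt v := by
  rw [← intervalIntegral.integral_of_le (by linarith : v ≤ 2*v)]
  rw [intervalIntegral.integral_comp_sub_right (fun x => x ^ (-(1:ℝ)/2)) v]
  rw [show v - v = (0:ℝ) by ring, show 2*v - v = v by ring]
  rw [integral_rpow (Or.inl (by norm_num))]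
  rw [show -(1:ℝ)/2 + 1 = 1/2 by norm_num]
  rw [Real.zero_rpow (by norm_num : (1:ℝ)/2 ≠ 0)]
  rw [Real.sqrt_eq_rpow]
  ring


lemma part_a (h : IsBranchingMechanism α β π) (hδ : 1 < deltaIndex (psiFun α β π))
    {c C : ℝ} (hc : 1 < c) (hC : 0 < C)
    (hs : ∀ μ l : ℝ, 1 ≤ μ → μ ≤ l → C * (psiFun α β π μ * μ ^ (-c)) ≤ psiFun α β π l * l ^ (-c))
    {v : ℝ} (hv1 : 1 ≤ v) :
    (∫ b in Set.Ioi v, (∫ a in v..b, psiFun α β π a) ^ (-(1:ℝ)/2))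
      ≤ (2 + 4 / ((c - 1) * Real.sqrt C)) * Real.sqrt (v / psiFun α β π v) := by
  have hv : 0 < v := lt_of_lt_of_le one_pos hv1
  have hmax : max v 1 = v := max_eq_left hv1
  have hP : 0 < psiFun α β π v := psi_pos h hδ v hv
  have hq1 : (c+1) * (-(1:ℝ)/2) < -1 := by nlinarith
  have hKpos : 0 < C * psiFun α β π v * v ^ (-c) * (2:ℝ) ^ (-(c+1)) :=
    mul_pos (mul_pos (mul_pos hC hP) (Real.rpow_pos_of_pos hv _))
      (Real.rpow_pos_of_pos (by norm_num) _)
  have hint1 : IntegrableOn (fun b => (∫ a in v..b, psiFun α β π a) ^ (-(1:ℝ)/2))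
      (Set.Ioc v (2*v)) := g_int_Ioc h hδ hv
  have hint2 : IntegrableOn (fun b => (∫ a in v..b, psiFun α β π a) ^ (-(1:ℝ)/2))
      (Set.Ioi (2*v)) := by
    have := g_int_Ioi h hδ hc hC hs hv
    rwa [hmax] at this
  have hsplit : Set.Ioi v = Set.Ioc v (2*v) ∪ Set.Ioi (2*v) :=
    (Set.Ioc_union_Ioi_eq_Ioi (by linarith)).symm
  rw [hsplit, setIntegral_union Set.Ioc_disjoint_Ioi_same measurableSet_Ioi hint1 hint2]
  have hbound1 : (∫ b in Set.Ioc v (2*v), (∫ a in v..b, psiFun α β π a) ^ (-(1:ℝ)/2))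
      ≤ psiFun α β π v ^ (-(1:ℝ)/2) * (2 * Real.sqrt v) := by
    have hb_int : IntegrableOn
        (fun b => psiFun α β π v ^ (-(1:ℝ)/2) * (b - v) ^ (-(1:ℝ)/2)) (Set.Ioc v (2*v)) := by
      have base : IntervalIntegrable (fun x : ℝ => x ^ (-(1:ℝ)/2)) volume 0 (2*v - v) := by
        apply intervalIntegral.intervalIntegrable_rpow'
        norm_num
      have shifted := base.comp_sub_right v
      simp only [zero_add, sub_add_cancel] at shifted
      exact ((intervalIntegrable_iff_integrableOn_Ioc_of_le (by linarith)).1 shifted).const_mul _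
    have hmono := setIntegral_mono_on hint1 hb_int measurableSet_Ioc
      (fun b hb => g_le_Ioc h hδ hv hb.1)
    rwa [MeasureTheory.integral_const_mul, int_Ioc_eval hv] at hmono
  have hbound2 : (∫ b in Set.Ioi (2*v), (∫ a in v..b, psiFun α β π a) ^ (-(1:ℝ)/2))
      ≤ (C * psiFun α β π v * v ^ (-c) * (2:ℝ) ^ (-(c+1))) ^ (-(1:ℝ)/2)
        * (-(2*v) ^ ((c+1) * (-(1:ℝ)/2) + 1) / ((c+1) * (-(1:ℝ)/2) + 1)) := by
    have hb_int : IntegrableOn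
        (fun b => (C * psiFun α β π v * v ^ (-c) * (2:ℝ) ^ (-(c+1))) ^ (-(1:ℝ)/2)
          * b ^ ((c+1) * (-(1:ℝ)/2))) (Set.Ioi (2*v)) :=
      (integrableOn_Ioi_rpow_of_lt hq1 (by linarith)).const_mul _
    have hmono := setIntegral_mono_on hint2 hb_int measurableSet_Ioi
      (fun b hb => by
        have := g_le_tail h hδ hC hs hv (show 2 * max v 1 < b by rw [hmax]; exact hb)
        rwa [hmax] at this)
    rwa [MeasureTheory.integral_const_mul, integral_Ioi_rpow_of_lt hq1 (by linarith)] at hmono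
  have e1 : psiFun α β π v ^ (-(1:ℝ)/2) * (2 * Real.sqrt v)
      = 2 * Real.sqrt (v / psiFun α β π v) := by
    have hPinv : psiFun α β π v ^ (-(1:ℝ)/2) = (Real.sqrt (psiFun α β π v))⁻¹ := by
      rw [show (-(1:ℝ)/2) = -(1/2) by norm_num, Real.rpow_neg hP.le, ← Real.sqrt_eq_rpow]
    rw [hPinv, Real.sqrt_div hv.le]
    have hsP : 0 < Real.sqrt (psiFun α β π v) := Real.sqrt_pos.2 hP
    field_simp
  have e2 : (C * psiFun α β π v * v ^ (-c) * (2:ℝ) ^ (-(c+1))) ^ (-(1:ℝ)/2)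
        * (-(2*v) ^ ((c+1) * (-(1:ℝ)/2) + 1) / ((c+1) * (-(1:ℝ)/2) + 1))
      = 4 / ((c - 1) * Real.sqrt C) * Real.sqrt (v / psiFun α β π v) := by
    have h2 : (0:ℝ) < 2 := two_pos
    have hvc : (0:ℝ) ≤ v ^ (-c) := (Real.rpow_pos_of_pos hv _).le
    have h2c : (0:ℝ) ≤ (2:ℝ) ^ (-(c+1)) := (Real.rpow_pos_of_pos h2 _).le
    have ek : (C * psiFun α β π v * v ^ (-c) * (2:ℝ) ^ (-(c+1))) ^ (-(1:ℝ)/2)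
        = C ^ (-(1:ℝ)/2) * psiFun α β π v ^ (-(1:ℝ)/2) * v ^ ((-c) * (-(1:ℝ)/2))
          * (2:ℝ) ^ ((-(c+1)) * (-(1:ℝ)/2)) := by
      rw [Real.mul_rpow (by positivity) h2c, Real.mul_rpow (by positivity) hvc,
        Real.mul_rpow hC.le hP.le, ← Real.rpow_mul hv.le, ← Real.rpow_mul h2.le]
    have e2v : ((2:ℝ) * v) ^ ((c+1) * (-(1:ℝ)/2) + 1)
        = (2:ℝ) ^ ((c+1) * (-(1:ℝ)/2) + 1) * v ^ ((c+1) * (-(1:ℝ)/2) + 1) :=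
      Real.mul_rpow h2.le hv.le
    have hvcomb : v ^ ((-c) * (-(1:ℝ)/2)) * v ^ ((c+1) * (-(1:ℝ)/2) + 1) = v ^ ((1:ℝ)/2) := by
      rw [← Real.rpow_add hv]; congr 1; ring
    have h2comb : (2:ℝ) ^ ((-(c+1)) * (-(1:ℝ)/2)) * (2:ℝ) ^ ((c+1) * (-(1:ℝ)/2) + 1)
        = 2 := by
      rw [← Real.rpow_add h2,
        show (-(c+1)) * (-(1:ℝ)/2) + ((c+1) * (-(1:ℝ)/2) + 1) = 1 by ring, Real.rpow_one]
    have hCs : C ^ (-(1:ℝ)/2) = (Real.sqrt C)⁻¹ := by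
      rw [show (-(1:ℝ)/2) = -(1/2) by norm_num, Real.rpow_neg hC.le, ← Real.sqrt_eq_rpow]
    have hPs : psiFun α β π v ^ (-(1:ℝ)/2) = (Real.sqrt (psiFun α β π v))⁻¹ := by
      rw [show (-(1:ℝ)/2) = -(1/2) by norm_num, Real.rpow_neg hP.le, ← Real.sqrt_eq_rpow]
    have hvs : v ^ ((1:ℝ)/2) = Real.sqrt v := by
      rw [Real.sqrt_eq_rpow]
    have hQne : (c+1) * (-(1:ℝ)/2) + 1 = (1-c)/2 := by ring
    have hsC : 0 < Real.sqrt C := Real.sqrt_pos.2 hC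
    have hsP : 0 < Real.sqrt (psiFun α β π v) := Real.sqrt_pos.2 hP
    have hc1 : c - 1 ≠ 0 := by linarith
    calc (C * psiFun α β π v * v ^ (-c) * (2:ℝ) ^ (-(c+1))) ^ (-(1:ℝ)/2)
          * (-(2*v) ^ ((c+1) * (-(1:ℝ)/2) + 1) / ((c+1) * (-(1:ℝ)/2) + 1))
        = (C ^ (-(1:ℝ)/2) * psiFun α β π v ^ (-(1:ℝ)/2))
            * (v ^ ((-c) * (-(1:ℝ)/2)) * v ^ ((c+1) * (-(1:ℝ)/2) + 1))
            * ((2:ℝ) ^ ((-(c+1)) * (-(1:ℝ)/2)) * (2:ℝ) ^ ((c+1) * (-(1:ℝ)/2) + 1))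
            * (-1 / ((c+1) * (-(1:ℝ)/2) + 1)) := by
          rw [ek, e2v]; ring1
      _ = ((Real.sqrt C)⁻¹ * (Real.sqrt (psiFun α β π v))⁻¹) * Real.sqrt v * 2
            * (-1 / ((1-c)/2)) := by
          rw [hvcomb, h2comb, hCs, hPs, hvs, hQne]
      _ = 4 / ((c - 1) * Real.sqrt C) * Real.sqrt (v / psiFun α β π v) := by
          rw [Real.sqrt_div hv.le,
            show (-1 : ℝ)/((1-c)/2) = 2/(c-1) by
              rw [div_eq_div_iff (show (1-c)/2 ≠ 0 by intro hz; apply hc1; linarith)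
                hc1]
              ring]
          field_simp
          ring
  rw [e1] at hbound1
  rw [e2] at hbound2
  have := add_le_add hbound1 hbound2
  calc _ ≤ 2 * Real.sqrt (v / psiFun α β π v)
        + 4 / ((c - 1) * Real.sqrt C) * Real.sqrt (v / psiFun α β π v) := this
    _ = (2 + 4 / ((c - 1) * Real.sqrt C)) * Real.sqrt (v / psiFun α β π v) := by ring

end Psi


/-- if δ > 1 then I(v) = ∫_v^∞ (∫_v^b ψ(a) da)^{−1/2} db is finite
for every v > 0, and there is C₁ > 0 with (a) I(v) ≤ (C₁ v/ψ(v))^{1/2} for v ≥ 1,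
and (b) for all v > 1 and 0 < r ≤ I(v), ψ′(v) ≤ 4C₁·r^{−2}. -/
theorem statement10 (α β : ℝ) (π : Measure ℝ) (h : IsBranchingMechanism α β π)
    (hδ : 1 < deltaIndex (psiFun α β π)) :
    (∀ v : ℝ, 0 < v →
      IntegrableOn (fun b => (∫ a in v..b, psiFun α β π a) ^ (-(1 : ℝ) / 2))
        (Set.Ioi v)) ∧
    ∃ C₁ : ℝ, 0 < C₁ ∧
      (∀ v : ℝ, 1 ≤ v →
        (∫ b in Set.Ioi v, (∫ a in v..b, psiFun α β π a) ^ (-(1 : ℝ) / 2))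
          ≤ Real.sqrt (C₁ * v / psiFun α β π v)) ∧
      (∀ v r : ℝ, 1 < v → 0 < r →
        r ≤ (∫ b in Set.Ioi v, (∫ a in v..b, psiFun α β π a) ^ (-(1 : ℝ) / 2)) →
        psiDeriv α β π v ≤ 4 * C₁ / r ^ 2) := by
  obtain ⟨c, hc, C, hC, hs⟩ := delta_extract hδ
  constructor
  · intro v hv
    exact g_int h hδ hc hC hs hv
  · have hsC : 0 < Real.sqrt C := Real.sqrt_pos.2 hC
    have hD4 : 0 < 4 / ((c - 1) * Real.sqrt C) := by
      apply div_pos (by norm_num) (mul_pos (by linarith) hsC)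
    set D := 2 + 4 / ((c - 1) * Real.sqrt C) with hD
    have hDpos : 0 < D := by rw [hD]; linarith
    refine ⟨D ^ 2, by positivity, ?_, ?_⟩
    · intro v hv1
      have hP : 0 < psiFun α β π v := psi_pos h hδ v (by linarith)
      have hkey := part_a h hδ hc hC hs hv1
      have hrw : Real.sqrt (D ^ 2 * v / psiFun α β π v)
          = D * Real.sqrt (v / psiFun α β π v) := by
        rw [mul_div_assoc, Real.sqrt_mul (by positivity) _, Real.sqrt_sq hDpos.le]
      rw [hrw]
      exact hkey
    · intro v r hv1 hr hrI
      have hv : 0 < v := by linarith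
      have hP : 0 < psiFun α β π v := psi_pos h hδ v hv
      have hkey := part_a h hδ hc hC hs (le_of_lt hv1)
      have hrle : r ≤ D * Real.sqrt (v / psiFun α β π v) := le_trans hrI hkey
      have hsq : r ^ 2 ≤ D ^ 2 * (v / psiFun α β π v) := by
        have h1 : r ^ 2 ≤ (D * Real.sqrt (v / psiFun α β π v)) ^ 2 :=
          pow_le_pow_left₀ hr.le hrle 2
        have h2 : (D * Real.sqrt (v / psiFun α β π v)) ^ 2
            = D ^ 2 * (v / psiFun α β π v) := by
          rw [mul_pow, Real.sq_sqrt (by positivity)]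
        linarith
      have hψ'le : v * psiDeriv α β π v ≤ 2 * psiFun α β π v := psi_deriv_le h hv
      have h3 : D ^ 2 * (v / psiFun α β π v) * psiFun α β π v = D ^ 2 * v := by
        field_simp
      have hPle : psiFun α β π v * r ^ 2 ≤ D ^ 2 * v := by
        have h4 := mul_le_mul_of_nonneg_right hsq hP.le
        rw [h3] at h4
        nlinarith [h4]
      have hr2 : 0 < r ^ 2 := by positivity
      rw [le_div_iff₀ hr2]
      nlinarith [mul_le_mul_of_nonneg_right hψ'le hr2.le, sq_nonneg D,
        mul_pos hv hr2]
end
end
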